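/- Let (X, C, k) be an instance of Weighted 2-SAT. Let C_1 be the 2-CNF over X consisting of the unit clauses (¬x) for every x ∈ X, and let C_2 = C. Then C has a satisfying assignment setting at most k variables to true if and only if the Multistage 2-SAT instance (X, (C_1, C_2), k) is a yes-instance. -/

import Mathlib

/-- A CNF formula: a list of clauses, each clause a list of literals `(variable, sign)`. -/
abbrev CNF (V : Type) := List (List (V × Bool))

/-- `f` satisfies the CNF `C`: every clause contains a literal evaluating to true. -/
def SatCNF {V : Type} (f : V → Bool) (C : CNF V) : Prop :=
  ∀ cl ∈ C, ∃ l ∈ cl, f l.1 = l.2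

/-- Hamming distance between two truth assignments. -/
def hdiff {V : Type} [Fintype V] (f g : V → Bool) : ℕ :=
  (Finset.univ.filter fun x => f x ≠ g x).card

/-- Yes-instance of Multistage SAT, stages given as a list of CNF formulas. -/
def MSatYes {V : Type} [Fintype V] (Φ : List (CNF V)) (d : ℕ) : Prop :=
  ∃ f : Fin Φ.length → V → Bool,
    (∀ i, SatCNF (f i) (Φ.get i)) ∧
    ∀ (i : ℕ) (h : i + 1 < Φ.length),
      hdiff (f ⟨i, Nat.lt_of_succ_lt h⟩) (f ⟨i + 1, h⟩) ≤ d

/-- Yes-instance of Multistage SAT, stages given as a function `Fin τ → CNF V`. -/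
def MSatYesF {V : Type} [Fintype V] (τ : ℕ) (Φ : Fin τ → CNF V) (d : ℕ) : Prop :=
  ∃ f : Fin τ → V → Bool,
    (∀ i, SatCNF (f i) (Φ i)) ∧
    ∀ (i : ℕ) (h : i + 1 < τ),
      hdiff (f ⟨i, Nat.lt_of_succ_lt h⟩) (f ⟨i + 1, h⟩) ≤ d

/-- A 2-CNF: every clause has at most two literals. -/
def Is2CNF {V : Type} (C : CNF V) : Prop := ∀ cl ∈ C, cl.length ≤ 2

theorem weighted_twosat_reduction {V : Type} [Fintype V] (C : CNF V) (h2 : Is2CNF C)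
    (k : ℕ) :
    (∃ f : V → Bool, SatCNF f C ∧ (Finset.univ.filter fun x => f x = true).card ≤ k) ↔
    MSatYes [Finset.univ.toList.map fun x : V => [(x, false)], C] k := by
  constructor
  · rintro ⟨f, hf, hk⟩
    refine ⟨![fun _ => false, f], ?_, ?_⟩
    · intro i
      fin_cases i
      · intro cl hcl
        simp only [List.get] at hcl ⊢
        change cl ∈ List.map (fun x : V => [(x, false)]) Finset.univ.toList at hcl
        simp only [List.mem_map] at hcl
        obtain ⟨x, -, rfl⟩ := hcl
        exact ⟨(x, false), by simp, rfl⟩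
      · exact hf
    · intro i h
      have hi : i = 0 := by have := h; simp only [List.length] at this; omega
      subst hi
      simpa [hdiff, Matrix.cons_val_zero, Matrix.cons_val_one] using hk
  · rintro ⟨f, hsat, hd⟩
    have l2 : [List.map (fun x : V => [(x, false)]) Finset.univ.toList, C].length = 2 := rfl
    refine ⟨f ⟨1, by rw [l2]; omega⟩, hsat _, ?_⟩
    have h0 : ∀ x, f ⟨0, by rw [l2]; omega⟩ x = false := by
      intro x
      have := hsat ⟨0, by rw [l2]; omega⟩ [(x, false)] (by simp)
      simpa using this
    have hd0 := hd 0 (by rw [l2]; omega)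
    calc (Finset.univ.filter fun x => f ⟨1, by rw [l2]; omega⟩ x = true).card
        ≤ hdiff (f ⟨0, by rw [l2]; omega⟩) (f ⟨1, by rw [l2]; omega⟩) := by
          apply Finset.card_le_card
          intro x hx
          simp only [Finset.mem_filter, Finset.mem_univ, true_and, hdiff] at hx ⊢
          rw [h0 x, hx]
          simp
      _ ≤ k := hd0
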